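/- For λ ∈ (0,1) and s with 0 < Re(s) < (1−λ)/λ, the degenerate gamma function satisfies Γ_λ(s+1) = (s/(1−λ)^(s+1)) · Γ_{λ/(1−λ)}(s). -/

import Mathlib

open MeasureTheory Set

/-- The degenerate gamma function `Γ_λ(s) = ∫₀^∞ (1+λt)^(−1/λ) t^(s−1) dt`. -/
noncomputable def degGamma (l : ℝ) (s : ℂ) : ℂ :=
  ∫ t in Ioi (0 : ℝ), (((1 + l * t) ^ (-(1 / l)) : ℝ) : ℂ) * (t : ℂ) ^ (s - 1)

private lemma aux_inv_cpow {a : ℝ} (ha : 0 < a) (w : ℂ) :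
    ((a⁻¹ : ℝ) : ℂ) ^ w = ((a : ℂ)) ^ (-w) := by
  rw [Complex.ofReal_inv, Complex.inv_cpow _ _ ?_, ← Complex.cpow_neg]
  rw [Complex.arg_ofReal_of_nonneg ha.le]
  exact Ne.symm Real.pi_ne_zero

private lemma beta_Ioi {s v : ℂ} (hs : 0 < s.re) (hv : 0 < v.re) :
    ∫ u in Ioi (0 : ℝ), (u : ℂ) ^ (s - 1) * ((1 : ℂ) + u) ^ (-(s + v)) =
      Complex.Gamma s * Complex.Gamma v / Complex.Gamma (s + v) := by
  have himg : (fun x : ℝ => x / (1 - x)) '' (Ioo 0 1) = Ioi (0 : ℝ) := by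
    ext y
    constructor
    · rintro ⟨x, ⟨hx0, hx1⟩, rfl⟩
      exact div_pos hx0 (by linarith)
    · intro hy
      have hy' : (0 : ℝ) < y := hy
      refine ⟨y / (1 + y), ⟨div_pos hy' (by linarith), ?_⟩, ?_⟩
      · rw [div_lt_one (by linarith)]; linarith
      · field_simp; ring
  have hderiv : ∀ x ∈ Ioo (0 : ℝ) 1,
      HasDerivWithinAt (fun x : ℝ => x / (1 - x)) (((1 - x) ^ 2)⁻¹) (Ioo 0 1) x := by
    intro x hx
    have h1x : (1 : ℝ) - x ≠ 0 := sub_ne_zero_of_ne hx.2.ne'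
    have := (HasDerivAt.div (hasDerivAt_id x)
      ((hasDerivAt_const x (1 : ℝ)).sub (hasDerivAt_id x)) h1x)
    refine this.hasDerivWithinAt.congr_deriv ?_
    simp only [Pi.sub_apply, id]
    field_simp
    ring
  have hinj : InjOn (fun x : ℝ => x / (1 - x)) (Ioo 0 1) := by
    intro a ha b hb hab
    have h1a : (1 : ℝ) - a ≠ 0 := sub_ne_zero_of_ne ha.2.ne'
    have h1b : (1 : ℝ) - b ≠ 0 := sub_ne_zero_of_ne hb.2.ne'
    field_simp at hab
    nlinarith [hab]
  have key := integral_image_eq_integral_abs_deriv_smul measurableSet_Ioo hderiv hinj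
    (fun u : ℝ => (u : ℂ) ^ (s - 1) * ((1 : ℂ) + u) ^ (-(s + v)))
  rw [himg] at key
  rw [key]
  have hcongr : ∫ x in Ioo (0:ℝ) 1,
      |((1 - x) ^ 2)⁻¹| • ((((x / (1 - x) : ℝ)) : ℂ) ^ (s - 1) *
        ((1 : ℂ) + ((x / (1 - x) : ℝ) : ℂ)) ^ (-(s + v))) =
      ∫ x in Ioo (0:ℝ) 1, (x : ℂ) ^ (s - 1) * (1 - (x : ℂ)) ^ (v - 1) := by
    apply setIntegral_congr_fun measurableSet_Ioo
    intro x hx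
    dsimp only
    have hx0 : (0 : ℝ) < x := hx.1
    have hx1 : (0 : ℝ) < 1 - x := by have := hx.2; linarith
    have h1xC : ((1 : ℝ) - x : ℂ) ≠ 0 := by
      exact_mod_cast Complex.ofReal_ne_zero.mpr hx1.ne'
    have e1 : (1 : ℝ) + x / (1 - x) = (1 - x)⁻¹ := by field_simp; ring
    have e2 : ((1 : ℂ) + ((x / (1 - x) : ℝ) : ℂ)) = (((1 - x)⁻¹ : ℝ) : ℂ) := by
      rw [← e1]; push_cast; ring
    have e3 : (((x / (1 - x) : ℝ)) : ℂ) ^ (s - 1) =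
        (x : ℂ) ^ (s - 1) * ((1 - x : ℝ) : ℂ) ^ (-(s - 1)) := by
      rw [div_eq_mul_inv, Complex.ofReal_mul, Complex.mul_cpow_ofReal_nonneg hx0.le (inv_nonneg.mpr hx1.le),
        aux_inv_cpow hx1 (s - 1)]
    have e4 : ((1 : ℂ) + ((x / (1 - x) : ℝ) : ℂ)) ^ (-(s + v)) =
        ((1 - x : ℝ) : ℂ) ^ (s + v) := by
      rw [e2, aux_inv_cpow hx1 (-(s + v)), neg_neg]
    have habs : |((1 - x) ^ 2)⁻¹| = ((1 - x) ^ 2)⁻¹ :=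
      abs_of_pos (by positivity)
    rw [e3, e4, habs, Complex.real_smul]
    have hXne : ((1:ℂ) - (x:ℂ)) ≠ 0 := by
      intro h; apply Complex.ofReal_ne_zero.mpr hx1.ne'; push_cast at h ⊢; linear_combination h
    have hc2 : ((1 - x : ℝ) : ℂ) = 1 - (x:ℂ) := by push_cast; ring
    have hinv2 : ((((1 - x) ^ 2)⁻¹ : ℝ) : ℂ) = (((1:ℂ) - (x:ℂ)) ^ (2:ℕ))⁻¹ := by
      push_cast; ring
    rw [hinv2, hc2]
    have hmerge : ((1:ℂ) - (x:ℂ)) ^ (-(s - 1)) * ((1:ℂ) - (x:ℂ)) ^ (s + v) =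
        ((1:ℂ) - (x:ℂ)) ^ (2:ℕ) * ((1:ℂ) - (x:ℂ)) ^ (v - 1) := by
      rw [← Complex.cpow_add _ _ hXne,
        (show (-(s - 1) + (s + v)) = (((2:ℕ):ℂ)) + (v - 1) by push_cast; ring),
        Complex.cpow_add _ _ hXne, Complex.cpow_natCast]
    have h2 : (((1:ℂ) - (x:ℂ)) ^ (2:ℕ)) ≠ 0 := pow_ne_zero _ hXne
    calc (((1:ℂ) - (x:ℂ)) ^ (2:ℕ))⁻¹ *
          ((x:ℂ) ^ (s - 1) * ((1:ℂ) - (x:ℂ)) ^ (-(s - 1)) * ((1:ℂ) - (x:ℂ)) ^ (s + v))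
        = (((1:ℂ) - (x:ℂ)) ^ (2:ℕ))⁻¹ * ((x:ℂ) ^ (s - 1) *
            (((1:ℂ) - (x:ℂ)) ^ (-(s - 1)) * ((1:ℂ) - (x:ℂ)) ^ (s + v))) := by ring
      _ = (((1:ℂ) - (x:ℂ)) ^ (2:ℕ))⁻¹ * ((x:ℂ) ^ (s - 1) *
            (((1:ℂ) - (x:ℂ)) ^ (2:ℕ) * ((1:ℂ) - (x:ℂ)) ^ (v - 1))) := by rw [hmerge]
      _ = (x:ℂ) ^ (s - 1) * ((1:ℂ) - (x:ℂ)) ^ (v - 1) := by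
          field_simp
  rw [hcongr]
  have hbeta : Complex.betaIntegral s v =
      ∫ x in Ioo (0:ℝ) 1, (x : ℂ) ^ (s - 1) * (1 - (x : ℂ)) ^ (v - 1) := by
    rw [Complex.betaIntegral, intervalIntegral.integral_of_le zero_le_one,
      MeasureTheory.integral_Ioc_eq_integral_Ioo]
  rw [← hbeta]
  have hG := Complex.Gamma_mul_Gamma_eq_betaIntegral hs hv
  have hGne : Complex.Gamma (s + v) ≠ 0 :=
    Complex.Gamma_ne_zero_of_re_pos (by rw [Complex.add_re]; positivity)
  field_simp
  rw [hG]; ring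

private lemma degGamma_eq (l : ℝ) (hl : 0 < l) (s : ℂ) (hs : 0 < s.re)
    (hs2 : s.re < 1 / l) :
    degGamma l s = (l : ℂ) ^ (-s) *
      (Complex.Gamma s * Complex.Gamma (1 / (l : ℂ) - s) / Complex.Gamma (1 / (l : ℂ))) := by
  have hlC : (l : ℂ) ≠ 0 := Complex.ofReal_ne_zero.mpr hl.ne'
  have hinv : (1 / (l : ℂ)) = ((1 / l : ℝ) : ℂ) := by push_cast; ring
  set v : ℂ := 1 / (l : ℂ) - s with hv
  have hvre : 0 < v.re := by
    rw [hv, Complex.sub_re, hinv, Complex.ofReal_re]; linarith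
  have step1 : degGamma l s = ∫ t in Ioi (0:ℝ),
      (l : ℂ) ^ ((1:ℂ) - s) * ((((l * t : ℝ)) : ℂ) ^ (s - 1) *
        ((1 : ℂ) + ((l * t : ℝ) : ℂ)) ^ (-(s + v))) := by
    rw [degGamma]
    apply setIntegral_congr_fun measurableSet_Ioi
    intro t ht
    dsimp only
    have ht0 : (0 : ℝ) < t := ht
    have h1lt : (0 : ℝ) ≤ 1 + l * t := by positivity
    have e1 : (((1 + l * t) ^ (-(1 / l)) : ℝ) : ℂ) =
        ((1 : ℂ) + ((l * t : ℝ) : ℂ)) ^ (-(s + v)) := by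
      rw [Complex.ofReal_cpow h1lt]
      push_cast
      congr 1
      rw [hv]; ring
    have e2 : (((l * t : ℝ)) : ℂ) ^ (s - 1) = (l : ℂ) ^ (s - 1) * (t : ℂ) ^ (s - 1) := by
      rw [Complex.ofReal_mul, Complex.mul_cpow_ofReal_nonneg hl.le ht0.le]
    rw [e1, e2]
    have e3 : (l : ℂ) ^ ((1:ℂ) - s) * (l : ℂ) ^ (s - 1) = 1 := by
      rw [← Complex.cpow_add _ _ hlC]
      ring_nf
      exact Complex.cpow_zero _
    calc ((1 : ℂ) + ((l * t : ℝ) : ℂ)) ^ (-(s + v)) * (t : ℂ) ^ (s - 1)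
        = ((l : ℂ) ^ ((1:ℂ) - s) * (l : ℂ) ^ (s - 1)) *
          (((1 : ℂ) + ((l * t : ℝ) : ℂ)) ^ (-(s + v)) * (t : ℂ) ^ (s - 1)) := by
          rw [e3]; ring
      _ = (l : ℂ) ^ ((1:ℂ) - s) * ((l : ℂ) ^ (s - 1) * (t : ℂ) ^ (s - 1) *
          ((1 : ℂ) + ((l * t : ℝ) : ℂ)) ^ (-(s + v))) := by ring
  rw [step1, MeasureTheory.integral_const_mul]
  have hcomp := MeasureTheory.integral_comp_mul_left_Ioi
    (fun u : ℝ => ((u : ℂ)) ^ (s - 1) * ((1 : ℂ) + (u : ℂ)) ^ (-(s + v))) 0 hl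
  simp only [mul_zero] at hcomp
  have : (∫ t in Ioi (0:ℝ), (((l * t : ℝ)) : ℂ) ^ (s - 1) *
      ((1 : ℂ) + ((l * t : ℝ) : ℂ)) ^ (-(s + v))) =
      l⁻¹ • ∫ u in Ioi (0:ℝ), ((u : ℂ)) ^ (s - 1) * ((1 : ℂ) + (u : ℂ)) ^ (-(s + v)) := by
    exact_mod_cast hcomp
  rw [this, beta_Ioi hs hvre]
  have hsv : s + v = 1 / (l : ℂ) := by rw [hv]; ring
  rw [hsv]
  rw [Complex.real_smul]
  have e4 : (l : ℂ) ^ ((1:ℂ) - s) * ((l⁻¹ : ℝ) : ℂ) = (l : ℂ) ^ (-s) := by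
    rw [Complex.ofReal_inv, ← Complex.cpow_neg_one, ← Complex.cpow_add _ _ hlC]
    congr 1
    ring
  rw [← mul_assoc, e4]

theorem degGamma_succ (l : ℝ) (hl : l ∈ Ioo (0 : ℝ) 1) (s : ℂ)
    (h0 : 0 < s.re) (h1 : s.re < (1 - l) / l) :
    degGamma l (s + 1) =
      s / ((1 - l : ℂ) ^ (s + 1)) * degGamma (l / (1 - l)) s := by
  obtain ⟨hl0, hl1⟩ := hl
  have h1l : (0 : ℝ) < 1 - l := by linarith
  have hfrac : (1 - l) / l = 1 / l - 1 := by field_simp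
  have hLne : ((l : ℂ)) ≠ 0 := Complex.ofReal_ne_zero.mpr hl0.ne'
  have h1Lne : ((1 : ℂ) - (l : ℂ)) ≠ 0 := by
    intro h; apply Complex.ofReal_ne_zero.mpr h1l.ne'; push_cast; linear_combination h
  -- LHS
  have hre1 : ((s + 1).re) = s.re + 1 := by simp
  have hL := degGamma_eq l hl0 (s + 1) (by rw [hre1]; linarith)
    (by rw [hre1]; rw [hfrac] at h1; linarith)
  -- RHS
  have hμ : (0 : ℝ) < l / (1 - l) := div_pos hl0 h1l
  have hμinv : 1 / (l / (1 - l)) = (1 - l) / l := one_div_div _ _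
  have hR := degGamma_eq (l / (1 - l)) hμ s h0 (by rw [hμinv]; exact h1)
  have hM : 1 / ((l / (1 - l) : ℝ) : ℂ) = 1 / (l : ℂ) - 1 := by
    push_cast
    field_simp
  rw [hL, hR, hM]
  -- Gamma manipulations
  have hsne : s ≠ 0 := by intro h; rw [h] at h0; simp at h0
  have hGs1 : Complex.Gamma (s + 1) = s * Complex.Gamma s := Complex.Gamma_add_one s hsne
  have hd : (1 / (l : ℂ) - 1) ≠ 0 := by
    intro h
    have h' := congrArg Complex.re h
    rw [(show 1 / (l : ℂ) - 1 = ((1 / l - 1 : ℝ) : ℂ) by push_cast; ring),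
      Complex.ofReal_re, Complex.zero_re] at h'
    rw [hfrac] at h1
    linarith
  have hGl : Complex.Gamma (1 / (l : ℂ)) = (1 / (l : ℂ) - 1) * Complex.Gamma (1 / (l : ℂ) - 1) := by
    rw [(show 1 / (l : ℂ) = (1 / (l : ℂ) - 1) + 1 by ring), Complex.Gamma_add_one _ hd]
    ring_nf
  have hGarg : Complex.Gamma (1 / (l : ℂ) - (s + 1)) = Complex.Gamma (1 / (l : ℂ) - 1 - s) := by
    congr 1; ring
  rw [hGs1, hGl, hGarg]
  -- cpow manipulations
  have hc1 : ((l : ℂ)) ^ (-(s + 1)) = (l : ℂ) ^ (-s) * ((l : ℂ))⁻¹ := by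
    rw [(show -(s + 1) = -s + (-1) by ring), Complex.cpow_add _ _ hLne, Complex.cpow_neg_one]
  have hc2 : (((l / (1 - l) : ℝ)) : ℂ) ^ (-s) =
      (l : ℂ) ^ (-s) * ((1 : ℂ) - (l : ℂ)) ^ s := by
    rw [(show l / (1 - l) = l * (1 - l)⁻¹ by rw [div_eq_mul_inv]), Complex.ofReal_mul,
      Complex.mul_cpow_ofReal_nonneg hl0.le (inv_nonneg.mpr h1l.le),
      aux_inv_cpow h1l (-s), neg_neg]
    congr 2
    push_cast; ring
  have hc3 : ((1 : ℂ) - (l : ℂ)) ^ (s + 1) = ((1 : ℂ) - (l : ℂ)) ^ s * ((1 : ℂ) - (l : ℂ)) := by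
    rw [Complex.cpow_add _ _ h1Lne, Complex.cpow_one]
  rw [hc1, hc2, hc3]
  have hCne : Complex.Gamma (1 / (l : ℂ) - 1 - s) ≠ 0 := by
    apply Complex.Gamma_ne_zero_of_re_pos
    rw [(show 1 / (l : ℂ) - 1 - s = ((1 / l - 1 : ℝ) : ℂ) - s by push_cast; ring)]
    rw [Complex.sub_re, Complex.ofReal_re]
    rw [hfrac] at h1
    linarith
  have hC2ne : Complex.Gamma (1 / (l : ℂ) - 1) ≠ 0 := by
    apply Complex.Gamma_ne_zero_of_re_pos
    rw [(show 1 / (l : ℂ) - 1 = ((1 / l - 1 : ℝ) : ℂ) by push_cast; ring), Complex.ofReal_re]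
    rw [hfrac] at h1
    linarith
  have hpne : ((l : ℂ)) ^ (-s) ≠ 0 := by
    simp [Complex.cpow_eq_zero_iff, hLne]
  have hqne : ((1 : ℂ) - (l : ℂ)) ^ s ≠ 0 := by
    simp [Complex.cpow_eq_zero_iff, h1Lne]
  set A := Complex.Gamma s with hA
  set B := Complex.Gamma (1 / (l : ℂ) - 1 - s) with hB
  set C := Complex.Gamma (1 / (l : ℂ) - 1) with hC
  field_simp [hLne, h1Lne, hC2ne, hpne, hqne, hd]
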